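/- Let A be an n×n matrix with nonnegative real entries such that μ(A) ≤ 1. Then there exists an integer q ≥ 1 such that for every j with 1 ≤ j ≤ q: (i) the sequence of max-times powers A^{⊗(kq+j)} converges entrywise, as k → ∞, to a matrix Ã^{(j)} satisfying A^{⊗q} ⊗ Ã^{(j)} = Ã^{(j)}; and (ii) for every x ∈ ℝ_{≥0}^n, the sequence A^{⊗(kq+j)} ⊗ x converges, as k → ∞, to a vector ξ_x^{(j)} ∈ ℝ_{≥0}^n satisfying A^{⊗q} ⊗ ξ_x^{(j)} = ξ_x^{(j)} (a periodic point of A whose period divides q). -/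

import Mathlib

open Filter Topology

/-- Max-times product of two square nonnegative matrices. -/
noncomputable def mProd {m : Type*} [Fintype m] (A B : Matrix m m NNReal) : Matrix m m NNReal :=
  fun i j => Finset.univ.sup fun k => A i k * B k j

/-- Max-times powers: `mPow A 0 = I`, `mPow A (k+1) = A ⊗ mPow A k`. -/
noncomputable def mPow {m : Type*} [Fintype m] [DecidableEq m] (A : Matrix m m NNReal) :
    ℕ → Matrix m m NNReal
  | 0 => 1
  | k + 1 => mProd A (mPow A k)

/-- Max-times action of a matrix on a nonnegative vector. -/
noncomputable def mVec {m : Type*} [Fintype m] (A : Matrix m m NNReal) (x : m → NNReal) :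
    m → NNReal :=
  fun i => Finset.univ.sup fun k => A i k * x k

/-- Maximum circuit geometric mean of a nonnegative matrix. -/
noncomputable def mu {m : Type*} [Fintype m] [DecidableEq m] (A : Matrix m m NNReal) : NNReal :=
  (Finset.Icc 1 (Fintype.card m)).sup fun ℓ =>
    Finset.univ.sup fun i => (mPow A ℓ i i) ^ ((ℓ : ℝ)⁻¹)

namespace MTAux

attribute [local instance] Classical.propDecidable

open Finset

variable {n : ℕ}

lemma le_mProd (A B : Matrix (Fin n) (Fin n) NNReal) (i j k : Fin n) :
    A i k * B k j ≤ mProd A B i j :=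
  Finset.le_sup (f := fun k => A i k * B k j) (Finset.mem_univ k)

lemma mProd_le {A B : Matrix (Fin n) (Fin n) NNReal} {i j : Fin n} {c : NNReal}
    (h : ∀ k, A i k * B k j ≤ c) : mProd A B i j ≤ c :=
  Finset.sup_le fun k _ => h k

lemma mProd_one (A : Matrix (Fin n) (Fin n) NNReal) : mProd A 1 = A := by
  funext i j
  apply le_antisymm
  · apply mProd_le; intro k
    rcases eq_or_ne k j with rfl | h
    · simp [Matrix.one_apply]
    · simp [Matrix.one_apply, h]
  · calc A i j = A i j * (1 : Matrix (Fin n) (Fin n) NNReal) j j := by simp [Matrix.one_apply]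
      _ ≤ _ := le_mProd _ _ _ _ _

lemma one_mProd (A : Matrix (Fin n) (Fin n) NNReal) : mProd 1 A = A := by
  funext i j
  apply le_antisymm
  · apply mProd_le; intro k
    rcases eq_or_ne i k with rfl | h
    · simp [Matrix.one_apply]
    · simp [Matrix.one_apply, h]
  · calc A i j = (1 : Matrix (Fin n) (Fin n) NNReal) i i * A i j := by simp [Matrix.one_apply]
      _ ≤ _ := le_mProd _ _ _ _ _

lemma mProd_assoc (A B C : Matrix (Fin n) (Fin n) NNReal) :
    mProd (mProd A B) C = mProd A (mProd B C) := by
  funext i j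
  apply le_antisymm
  · apply mProd_le; intro l
    calc mProd A B i l * C l j
        = Finset.univ.sup fun k => A i k * B k l * C l j :=
          NNReal.finset_sup_mul Finset.univ (fun k => A i k * B k l) (C l j)
      _ ≤ _ := by
          apply Finset.sup_le
          intro k _
          calc A i k * B k l * C l j = A i k * (B k l * C l j) := mul_assoc _ _ _
            _ ≤ A i k * mProd B C k j := mul_le_mul_right (le_mProd _ _ _ _ _) _
            _ ≤ _ := le_mProd _ _ _ _ _
  · apply mProd_le; intro k
    calc A i k * mProd B C k j
        = Finset.univ.sup fun l => A i k * (B k l * C l j) :=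
          NNReal.mul_finset_sup (A i k) Finset.univ (fun l => B k l * C l j)
      _ ≤ _ := by
          apply Finset.sup_le
          intro l _
          calc A i k * (B k l * C l j) = A i k * B k l * C l j := (mul_assoc _ _ _).symm
            _ ≤ mProd A B i l * C l j := mul_le_mul_left (le_mProd _ _ _ _ _) _
            _ ≤ _ := le_mProd _ _ _ _ _

lemma mPow_add (A : Matrix (Fin n) (Fin n) NNReal) (s t : ℕ) :
    mPow A (s + t) = mProd (mPow A s) (mPow A t) := by
  induction s with
  | zero => simp [mPow, one_mProd]
  | succ s ih =>
      have h : s + 1 + t = (s + t) + 1 := by omega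
      rw [h]
      show mProd A (mPow A (s + t)) = _
      rw [ih]
      show mProd A (mProd (mPow A s) (mPow A t)) = mProd (mProd A (mPow A s)) (mPow A t)
      rw [mProd_assoc]

lemma mVec_mProd (A B : Matrix (Fin n) (Fin n) NNReal) (x : Fin n → NNReal) :
    mVec (mProd A B) x = mVec A (mVec B x) := by
  funext i
  apply le_antisymm
  · apply Finset.sup_le; intro l _
    calc mProd A B i l * x l
        = Finset.univ.sup fun k => A i k * B k l * x l :=
          NNReal.finset_sup_mul Finset.univ (fun k => A i k * B k l) (x l)
      _ ≤ _ := by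
          apply Finset.sup_le
          intro k _
          calc A i k * B k l * x l = A i k * (B k l * x l) := mul_assoc _ _ _
            _ ≤ A i k * mVec B x k :=
                mul_le_mul_right (Finset.le_sup (f := fun l => B k l * x l)
                  (Finset.mem_univ l)) _
            _ ≤ _ := Finset.le_sup (f := fun k => A i k * mVec B x k) (Finset.mem_univ k)
  · apply Finset.sup_le; intro k _
    calc A i k * mVec B x k
        = Finset.univ.sup fun l => A i k * (B k l * x l) :=
          NNReal.mul_finset_sup (A i k) Finset.univ (fun l => B k l * x l)
      _ ≤ _ := by
          apply Finset.sup_le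
          intro l _
          calc A i k * (B k l * x l) = A i k * B k l * x l := (mul_assoc _ _ _).symm
            _ ≤ mProd A B i l * x l := mul_le_mul_left (le_mProd _ _ _ _ _) _
            _ ≤ _ := Finset.le_sup (f := fun l => mProd A B i l * x l) (Finset.mem_univ l)

lemma mPow_mono {A B : Matrix (Fin n) (Fin n) NNReal} (h : ∀ i j, A i j ≤ B i j) (m : ℕ) :
    ∀ i j, mPow A m i j ≤ mPow B m i j := by
  induction m with
  | zero => intro i j; exact le_rfl
  | succ m ih =>
      intro i j
      apply mProd_le
      intro k
      exact le_trans (mul_le_mul' (h i k) (ih k j)) (le_mProd _ _ _ _ _)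

/-- weight of a path of length `m` given by `f`. -/
noncomputable def pw (A : Matrix (Fin n) (Fin n) NNReal) (f : ℕ → Fin n) (m : ℕ) : NNReal :=
  ∏ t ∈ Finset.range m, A (f t) (f (t + 1))

lemma pw_add (A : Matrix (Fin n) (Fin n) NNReal) (f : ℕ → Fin n) (a b : ℕ) :
    pw A f (a + b) = pw A f a * pw A (fun u => f (a + u)) b := by
  unfold pw
  rw [Finset.prod_range_add]
  rfl

lemma pw_congr {A : Matrix (Fin n) (Fin n) NNReal} {f g : ℕ → Fin n} {m : ℕ}
    (h : ∀ u, u ≤ m → f u = g u) : pw A f m = pw A g m := by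
  unfold pw
  apply Finset.prod_congr rfl
  intro u hu
  rw [Finset.mem_range] at hu
  rw [h u (by omega), h (u + 1) (by omega)]

lemma pw_le_mPow {A : Matrix (Fin n) (Fin n) NNReal} {f : ℕ → Fin n} {m : ℕ} {i j : Fin n}
    (h0 : f 0 = i) (hm : f m = j) : pw A f m ≤ mPow A m i j := by
  induction m generalizing f i with
  | zero =>
      have : i = j := by rw [← h0, hm]
      subst this
      simp [pw, mPow, Matrix.one_apply]
  | succ m ih =>
      have h1 : pw A f (1 + m) = pw A f 1 * pw A (fun u => f (1 + u)) m := pw_add A f 1 m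
      rw [Nat.add_comm 1 m] at h1
      have h2 : pw A f 1 = A i (f 1) := by
        unfold pw; rw [Finset.prod_range_one, h0]
      have h3 : pw A (fun u => f (1 + u)) m ≤ mPow A m (f 1) j := by
        apply ih
        · rfl
        · show f (1 + m) = j
          rw [Nat.add_comm]; exact hm
      calc pw A f (m + 1) = A i (f 1) * pw A (fun u => f (1 + u)) m := by rw [h1, h2]
        _ ≤ A i (f 1) * mPow A m (f 1) j := mul_le_mul_right h3 _
        _ ≤ mPow A (m + 1) i j := le_mProd _ _ _ _ _

lemma exists_path_aux (A : Matrix (Fin n) (Fin n) NNReal) (m : ℕ) (i j : Fin n) :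
    ∃ f : ℕ → Fin n, f 0 = i ∧ f (m + 1) = j ∧ pw A f (m + 1) = mPow A (m + 1) i j := by
  induction m generalizing i with
  | zero =>
      refine ⟨fun t => if t = 0 then i else j, by simp, by simp, ?_⟩
      have h1 : mPow A 1 = A := by
        show mProd A (mPow A 0) = A
        show mProd A 1 = A
        exact mProd_one A
      rw [h1]
      unfold pw
      rw [Finset.prod_range_one]
      simp
  | succ m ih =>
      have hne : (Finset.univ : Finset (Fin n)).Nonempty := ⟨i, Finset.mem_univ i⟩
      obtain ⟨k0, _, hk0⟩ := Finset.exists_mem_eq_sup Finset.univ hne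
        (fun k => A i k * mPow A (m + 1) k j)
      obtain ⟨f', hf'0, hf'm, hf'w⟩ := ih k0
      refine ⟨fun t => if t = 0 then i else f' (t - 1), by simp, by simp [hf'm], ?_⟩
      set f : ℕ → Fin n := fun t => if t = 0 then i else f' (t - 1) with hf
      have h1 : pw A f (1 + (m + 1)) = pw A f 1 * pw A (fun u => f (1 + u)) (m + 1) :=
        pw_add A f 1 (m + 1)
      have h2 : pw A f 1 = A i (f' 0) := by
        unfold pw; rw [Finset.prod_range_one]; simp [hf]
      have h3 : pw A (fun u => f (1 + u)) (m + 1) = pw A f' (m + 1) := by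
        apply pw_congr
        intro u _
        simp only [hf]
        have h4 : 1 + u ≠ 0 := by omega
        rw [if_neg h4]
        congr 1
        omega
      have hw : pw A f (m + 1 + 1) = A i (f' 0) * pw A (fun u => f (1 + u)) (m + 1) := by
        rw [show m + 1 + 1 = 1 + (m + 1) from by omega, h1, h2]
      rw [hw, h3, hf'w, hf'0]
      have h5 : mPow A (m + 1 + 1) i j =
          Finset.univ.sup fun k => A i k * mPow A (m + 1) k j := rfl
      rw [h5, hk0]

lemma exists_path (A : Matrix (Fin n) (Fin n) NNReal) {m : ℕ} (hm : 1 ≤ m) (i j : Fin n) :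
    ∃ f : ℕ → Fin n, f 0 = i ∧ f m = j ∧ pw A f m = mPow A m i j := by
  cases m with
  | zero => omega
  | succ m => exact exists_path_aux A m i j

lemma diag_le_mu_pow (A : Matrix (Fin n) (Fin n) NNReal) {ℓ : ℕ} (hl1 : 1 ≤ ℓ) (hln : ℓ ≤ n)
    (v : Fin n) : mPow A ℓ v v ≤ mu A ^ ℓ := by
  have h1 : (mPow A ℓ v v) ^ ((ℓ : ℝ)⁻¹) ≤ mu A := by
    unfold mu
    refine le_trans
      (Finset.le_sup (f := fun i => (mPow A ℓ i i) ^ ((ℓ : ℝ)⁻¹)) (Finset.mem_univ v))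
      (Finset.le_sup
        (f := fun ℓ => Finset.univ.sup fun i => (mPow A ℓ i i) ^ ((ℓ : ℝ)⁻¹)) (b := ℓ) ?_)
    simp only [Fintype.card_fin]
    exact Finset.mem_Icc.mpr ⟨hl1, hln⟩
  have hl0 : (ℓ : ℝ) ≠ 0 := by positivity
  have h2 : ((mPow A ℓ v v) ^ ((ℓ : ℝ)⁻¹)) ^ ℓ ≤ (mu A) ^ ℓ := pow_le_pow_left' h1 ℓ
  calc mPow A ℓ v v = (mPow A ℓ v v) ^ (((ℓ : ℝ)⁻¹) * (ℓ : ℝ)) := by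
        rw [inv_mul_cancel₀ hl0, NNReal.rpow_one]
    _ = ((mPow A ℓ v v) ^ ((ℓ : ℝ)⁻¹)) ^ ((ℓ : ℕ) : ℝ) := NNReal.rpow_mul _ _ _
    _ = ((mPow A ℓ v v) ^ ((ℓ : ℝ)⁻¹)) ^ ℓ := NNReal.rpow_natCast _ ℓ
    _ ≤ (mu A) ^ ℓ := h2

lemma pigeon (A : Matrix (Fin n) (Fin n) NNReal) {m : ℕ} (i j : Fin n) (hm : n ≤ m) :
    mPow A m i j ≤ (Finset.Icc 1 n).sup fun ℓ => mu A ^ ℓ * mPow A (m - ℓ) i j := by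
  have hn : 1 ≤ n := i.pos
  obtain ⟨f, hf0, hfm, hfw⟩ := exists_path A (le_trans hn hm) i j
  have hcard : Fintype.card (Fin n) < Fintype.card (Fin (n + 1)) := by simp
  obtain ⟨s, t, hst, hfeq⟩ :=
    Fintype.exists_ne_map_eq_of_card_lt (fun t : Fin (n + 1) => f (t : ℕ)) hcard
  obtain ⟨a, b, hab, hbn, hfab⟩ : ∃ a b : ℕ, a < b ∧ b ≤ n ∧ f a = f b := by
    rcases lt_or_gt_of_ne hst with h | h
    · exact ⟨(s : ℕ), (t : ℕ), h, Nat.lt_succ_iff.mp t.isLt, hfeq⟩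
    · exact ⟨(t : ℕ), (s : ℕ), h, Nat.lt_succ_iff.mp s.isLt, hfeq.symm⟩
  set ℓ := b - a with hℓ
  have hl1 : 1 ≤ ℓ := by omega
  have hln : ℓ ≤ n := by omega
  have hbm : b ≤ m := le_trans hbn hm
  set g : ℕ → Fin n := fun u => if u < a then f u else f (u + ℓ) with hg
  -- decomposition of pw f m
  have e1 : pw A f m = pw A f a * pw A (fun u => f (a + u)) (ℓ + (m - b)) := by
    have := pw_add A f a (ℓ + (m - b))
    rw [show a + (ℓ + (m - b)) = m from by omega] at this
    exact this
  have e2 : pw A (fun u => f (a + u)) (ℓ + (m - b)) =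
      pw A (fun u => f (a + u)) ℓ * pw A (fun u => f (b + u)) (m - b) := by
    rw [pw_add]
    congr 1
    apply pw_congr
    intro u _
    show f (a + (ℓ + u)) = f (b + u)
    congr 1
    omega
  -- decomposition of pw g (m - ℓ)
  have e3 : pw A g (m - ℓ) = pw A f a * pw A (fun u => f (b + u)) (m - b) := by
    have := pw_add A g a (m - b)
    rw [show a + (m - b) = m - ℓ from by omega] at this
    rw [this]
    congr 1
    · apply pw_congr
      intro u hu
      rcases lt_or_eq_of_le hu with h | h
      · simp only [hg]
        rw [if_pos h]
      · subst h
        simp only [hg]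
        rw [if_neg (lt_irrefl u)]
        rw [show u + ℓ = b from by omega, ← hfab]
    · apply pw_congr
      intro u _
      simp only [hg]
      rw [if_neg (by omega : ¬ (a + u < a))]
      congr 1
      omega
  -- the circuit weight is at most mu ^ ℓ
  have hcirc : pw A (fun u => f (a + u)) ℓ ≤ mu A ^ ℓ := by
    refine le_trans (pw_le_mPow (i := f a) (j := f a) rfl ?_) (diag_le_mu_pow A hl1 hln (f a))
    show f (a + ℓ) = f a
    rw [show a + ℓ = b from by omega, hfab]
  -- g is a path from i to j of length m - ℓ
  have hg0 : g 0 = i := by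
    rcases Nat.eq_zero_or_pos a with h | h
    · have h0 : g 0 = f (0 + ℓ) := by
        simp only [hg]
        rw [if_neg (by omega)]
      rw [h0, show 0 + ℓ = b from by omega, ← hfab, h, hf0]
    · simp only [hg]
      rw [if_pos h, hf0]
  have hgm : g (m - ℓ) = j := by
    simp only [hg]
    rw [if_neg (by omega : ¬ (m - ℓ < a)), show m - ℓ + ℓ = m from by omega, hfm]
  have hgle : pw A g (m - ℓ) ≤ mPow A (m - ℓ) i j := pw_le_mPow hg0 hgm
  calc mPow A m i j = pw A f m := hfw.symm
    _ = pw A g (m - ℓ) * pw A (fun u => f (a + u)) ℓ := by rw [e1, e2, e3]; ring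
    _ ≤ mPow A (m - ℓ) i j * mu A ^ ℓ := mul_le_mul' hgle hcirc
    _ = mu A ^ ℓ * mPow A (m - ℓ) i j := mul_comm _ _
    _ ≤ _ := Finset.le_sup (f := fun ℓ => mu A ^ ℓ * mPow A (m - ℓ) i j)
        (Finset.mem_Icc.mpr ⟨hl1, hln⟩)

/-- uniform bound on entries of powers. -/
noncomputable def Cb (A : Matrix (Fin n) (Fin n) NNReal) (i j : Fin n) : NNReal :=
  (Finset.range (n + 1)).sup fun m' => mPow A m' i j

lemma bounded {A : Matrix (Fin n) (Fin n) NNReal} (hA : mu A ≤ 1) (i j : Fin n) (m : ℕ) :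
    mPow A m i j ≤ Cb A i j := by
  induction m using Nat.strong_induction_on with
  | _ m ih =>
      rcases le_or_gt m n with h | h
      · exact Finset.le_sup (f := fun m' => mPow A m' i j) (Finset.mem_range.mpr (by omega))
      · refine le_trans (pigeon A i j h.le) ?_
        apply Finset.sup_le
        intro ℓ hℓ
        rw [Finset.mem_Icc] at hℓ
        calc mu A ^ ℓ * mPow A (m - ℓ) i j ≤ 1 * Cb A i j :=
              mul_le_mul' (pow_le_one' hA ℓ) (ih (m - ℓ) (by omega))
          _ = Cb A i j := one_mul _

lemma decay {A : Matrix (Fin n) (Fin n) NNReal} (hA : mu A < 1) (i j : Fin n) :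
    Tendsto (fun m => mPow A m i j) atTop (nhds 0) := by
  have hn : 1 ≤ n := i.pos
  have key : ∀ k m, k * n ≤ m → mPow A m i j ≤ mu A ^ k * Cb A i j := by
    intro k
    induction k with
    | zero => intro m _; simpa using bounded hA.le i j m
    | succ k ih =>
        intro m hm
        have hkn : (k + 1) * n = k * n + n := by ring
        have hnm : n ≤ m := by omega
        refine le_trans (pigeon A i j hnm) ?_
        apply Finset.sup_le
        intro ℓ hℓ
        rw [Finset.mem_Icc] at hℓ
        have h1 : mu A ^ ℓ ≤ mu A := by
          calc mu A ^ ℓ ≤ mu A ^ 1 := pow_le_pow_right_of_le_one' hA.le hℓ.1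
            _ = mu A := pow_one _
        have h2 : mPow A (m - ℓ) i j ≤ mu A ^ k * Cb A i j := ih (m - ℓ) (by omega)
        calc mu A ^ ℓ * mPow A (m - ℓ) i j ≤ mu A * (mu A ^ k * Cb A i j) :=
              mul_le_mul' h1 h2
          _ = mu A ^ (k + 1) * Cb A i j := by ring
  have hdiv : Tendsto (fun m : ℕ => m / n) atTop atTop := by
    apply tendsto_atTop_atTop.mpr
    intro b
    refine ⟨b * n, fun m hm => ?_⟩
    exact (Nat.le_div_iff_mul_le (by omega)).mpr hm
  have hb : Tendsto (fun k => mu A ^ k * Cb A i j) atTop (nhds 0) := by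
    have := (NNReal.tendsto_pow_atTop_nhds_zero_of_lt_one hA).mul_const (Cb A i j)
    rwa [zero_mul] at this
  exact tendsto_of_tendsto_of_tendsto_of_le_of_le (tendsto_const_nhds) (hb.comp hdiv)
    (fun m => zero_le) (fun m => key (m / n) m (Nat.div_mul_le_self m n))

/-- critical nodes: nodes lying on a circuit of weight 1. -/
def Crit (A : Matrix (Fin n) (Fin n) NNReal) (v : Fin n) : Prop :=
  ∃ ℓ ∈ Finset.Icc 1 n, mPow A ℓ v v = 1

lemma diag_pow_le (A : Matrix (Fin n) (Fin n) NNReal) (ℓ t : ℕ) (v : Fin n) :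
    (mPow A ℓ v v) ^ t ≤ mPow A (ℓ * t) v v := by
  induction t with
  | zero => simp [mPow, Matrix.one_apply]
  | succ t ih =>
      have h1 : ℓ * (t + 1) = ℓ * t + ℓ := by ring
      rw [h1, mPow_add]
      calc (mPow A ℓ v v) ^ (t + 1) = (mPow A ℓ v v) ^ t * mPow A ℓ v v := pow_succ _ _
        _ ≤ mPow A (ℓ * t) v v * mPow A ℓ v v := mul_le_mul_left ih _
        _ ≤ _ := le_mProd _ _ _ _ _

lemma crit_pow {A : Matrix (Fin n) (Fin n) NNReal} {v : Fin n} (hv : Crit A v) :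
    1 ≤ mPow A (Nat.factorial n) v v := by
  obtain ⟨ℓ, hℓ, h1⟩ := hv
  rw [Finset.mem_Icc] at hℓ
  obtain ⟨t, ht⟩ := Nat.dvd_factorial (by omega) hℓ.2
  rw [ht]
  calc (1 : NNReal) = (mPow A ℓ v v) ^ t := by rw [h1, one_pow]
    _ ≤ _ := diag_pow_le A ℓ t v

/-- the restriction of `A` to non-critical nodes. -/
noncomputable def subm (A : Matrix (Fin n) (Fin n) NNReal) : Matrix (Fin n) (Fin n) NNReal :=
  fun i j => if Crit A i ∨ Crit A j then 0 else A i j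

lemma subm_le (A : Matrix (Fin n) (Fin n) NNReal) : ∀ i j, subm A i j ≤ A i j := by
  intro i j
  unfold subm
  split
  · exact zero_le
  · exact le_rfl

lemma subm_row_zero {A : Matrix (Fin n) (Fin n) NNReal} {v : Fin n} (hv : Crit A v)
    {m : ℕ} (hm : 1 ≤ m) (w : Fin n) : mPow (subm A) m v w = 0 := by
  cases m with
  | zero => omega
  | succ m =>
      apply le_antisymm _ zero_le
      apply mProd_le
      intro k
      have h0 : subm A v k = 0 := by unfold subm; rw [if_pos (Or.inl hv)]
      rw [h0, zero_mul]

lemma mu_subm_lt {A : Matrix (Fin n) (Fin n) NNReal} (hA : mu A ≤ 1) : mu (subm A) < 1 := by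
  unfold mu
  rw [Finset.sup_lt_iff (by norm_num : (⊥ : NNReal) < 1)]
  intro ℓ hℓ
  rw [Fintype.card_fin, Finset.mem_Icc] at hℓ
  rw [Finset.sup_lt_iff (by norm_num : (⊥ : NNReal) < 1)]
  intro v _
  have hlpos : (0 : ℝ) < (ℓ : ℝ)⁻¹ := by
    have h0 : (0 : ℝ) < (ℓ : ℝ) := by exact_mod_cast (by omega : 0 < ℓ)
    positivity
  by_cases hv : Crit A v
  · rw [subm_row_zero hv hℓ.1 v, NNReal.zero_rpow (ne_of_gt hlpos)]
    norm_num
  · have h1 : mPow (subm A) ℓ v v ≤ mPow A ℓ v v := mPow_mono (subm_le A) ℓ v v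
    have h2 : mPow A ℓ v v < 1 := by
      rcases lt_or_eq_of_le (le_trans (diag_le_mu_pow A hℓ.1 hℓ.2 v) (pow_le_one' hA ℓ))
        with h | h
      · exact h
      · exact absurd ⟨ℓ, Finset.mem_Icc.mpr hℓ, h⟩ hv
    exact NNReal.rpow_lt_one (lt_of_le_of_lt h1 h2) hlpos

/-- best weight of a length-`m` path from `i` to `j` through a critical node. -/
noncomputable def cseq (A : Matrix (Fin n) (Fin n) NNReal) (i j : Fin n) (m : ℕ) : NNReal :=
  (Finset.range (m + 1)).sup fun a => Finset.univ.sup fun v =>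
    if Crit A v then mPow A a i v * mPow A (m - a) v j else 0

lemma cseq_le {A : Matrix (Fin n) (Fin n) NNReal} (i j : Fin n) (m : ℕ) :
    cseq A i j m ≤ mPow A m i j := by
  apply Finset.sup_le
  intro a ha
  rw [Finset.mem_range] at ha
  apply Finset.sup_le
  intro v _
  split
  · calc mPow A a i v * mPow A (m - a) v j ≤ mPow A (a + (m - a)) i j := by
          rw [mPow_add]; exact le_mProd _ _ _ _ _
      _ = mPow A m i j := by rw [show a + (m - a) = m from by omega]
  · exact zero_le

lemma le_cseq {A : Matrix (Fin n) (Fin n) NNReal} {i j v : Fin n} (hv : Crit A v) {a m : ℕ}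
    (ha : a ≤ m) : mPow A a i v * mPow A (m - a) v j ≤ cseq A i j m := by
  refine le_trans ?_ (Finset.le_sup
    (f := fun a => Finset.univ.sup fun v =>
      if Crit A v then mPow A a i v * mPow A (m - a) v j else 0)
    (Finset.mem_range.mpr (by omega : a < m + 1)))
  refine le_trans ?_ (Finset.le_sup
    (f := fun v => if Crit A v then mPow A a i v * mPow A (m - a) v j else 0)
    (Finset.mem_univ v))
  exact le_of_eq (if_pos hv).symm

lemma cseq_mono_q {A : Matrix (Fin n) (Fin n) NNReal} (i j : Fin n) (m : ℕ) :
    cseq A i j m ≤ cseq A i j (m + Nat.factorial n) := by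
  set q := Nat.factorial n with hq
  apply Finset.sup_le
  intro a ha
  rw [Finset.mem_range] at ha
  apply Finset.sup_le
  intro v _
  split
  next hv =>
    have h1 : mPow A (m - a) v j ≤ mPow A (q + (m - a)) v j := by
      rw [mPow_add]
      calc mPow A (m - a) v j = 1 * mPow A (m - a) v j := (one_mul _).symm
        _ ≤ mPow A q v v * mPow A (m - a) v j := mul_le_mul_left (crit_pow hv) _
        _ ≤ _ := le_mProd _ _ _ _ _
    rw [show q + (m - a) = (m + q) - a from by omega] at h1
    exact le_trans (mul_le_mul_right h1 _) (le_cseq hv (by omega))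
  next => exact zero_le

lemma split_bound {A : Matrix (Fin n) (Fin n) NNReal} (i j : Fin n) {m : ℕ} (hm : 1 ≤ m) :
    mPow A m i j ≤ max (cseq A i j m) (mPow (subm A) m i j) := by
  obtain ⟨f, hf0, hfm, hfw⟩ := exists_path A hm i j
  rw [← hfw]
  by_cases hc : ∃ t ≤ m, Crit A (f t)
  · obtain ⟨t, htm, hcrit⟩ := hc
    refine le_trans ?_ (le_max_left _ _)
    have hdec : pw A f m = pw A f t * pw A (fun u => f (t + u)) (m - t) := by
      have := pw_add A f t (m - t)
      rw [show t + (m - t) = m from by omega] at this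
      exact this
    rw [hdec]
    refine le_trans (mul_le_mul' (pw_le_mPow hf0 rfl)
      (pw_le_mPow (i := f t) (j := j) rfl ?_)) (le_cseq hcrit htm)
    show f (t + (m - t)) = j
    rw [show t + (m - t) = m from by omega, hfm]
  · push_neg at hc
    refine le_trans ?_ (le_max_right _ _)
    have heq : pw A f m = pw (subm A) f m := by
      unfold pw
      apply Finset.prod_congr rfl
      intro u hu
      rw [Finset.mem_range] at hu
      show A (f u) (f (u + 1)) = subm A (f u) (f (u + 1))
      unfold subm
      rw [if_neg (not_or.mpr ⟨hc u (by omega), hc (u + 1) (by omega)⟩)]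
    rw [heq]
    exact pw_le_mPow hf0 hfm

lemma tendsto_finset_sup {ι : Type*} [DecidableEq ι] (s : Finset ι) (f : ι → ℕ → NNReal)
    (L : ι → NNReal) :
    (∀ a ∈ s, Tendsto (f a) atTop (nhds (L a))) →
    Tendsto (fun k => s.sup fun a => f a k) atTop (nhds (s.sup L)) := by
  induction s using Finset.induction with
  | empty => intro _; simpa using tendsto_const_nhds
  | insert a s hnot ih =>
      intro h
      simp only [Finset.sup_insert]
      exact (h a (Finset.mem_insert_self a s)).max
        (ih fun b hb => h b (Finset.mem_insert_of_mem hb))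

lemma entry_conv {A : Matrix (Fin n) (Fin n) NNReal} (hA : mu A ≤ 1) (i j : Fin n) {r : ℕ}
    (hr : 1 ≤ r) :
    ∃ L, Tendsto (fun k => mPow A (k * Nat.factorial n + r) i j) atTop (nhds L) := by
  set q := Nat.factorial n with hq
  have hq1 : 1 ≤ q := Nat.one_le_iff_ne_zero.mpr (Nat.factorial_ne_zero n)
  have hmono : Monotone fun k => cseq A i j (k * q + r) := by
    apply monotone_nat_of_le_succ
    intro k
    have h1 : (k + 1) * q + r = (k * q + r) + q := by ring
    rw [h1]
    exact cseq_mono_q i j (k * q + r)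
  have hbdd : BddAbove (Set.range fun k => cseq A i j (k * q + r)) := by
    refine ⟨Cb A i j, ?_⟩
    rintro x ⟨k, rfl⟩
    exact le_trans (cseq_le i j _) (bounded hA i j _)
  have h1 : Tendsto (fun k => cseq A i j (k * q + r)) atTop
      (nhds (⨆ k, cseq A i j (k * q + r))) := tendsto_atTop_ciSup hmono hbdd
  have hcomp : Tendsto (fun k : ℕ => k * q + r) atTop atTop := by
    apply tendsto_atTop_mono (fun k => ?_) tendsto_id
    calc (id k : ℕ) = k * 1 := (mul_one k).symm
      _ ≤ k * q := Nat.mul_le_mul_left k hq1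
      _ ≤ k * q + r := Nat.le_add_right _ _
  have h2 : Tendsto (fun k => mPow (subm A) (k * q + r) i j) atTop (nhds 0) :=
    (decay (mu_subm_lt hA) i j).comp hcomp
  have heq : ∀ k, mPow A (k * q + r) i j =
      max (cseq A i j (k * q + r)) (mPow (subm A) (k * q + r) i j) := by
    intro k
    apply le_antisymm
    · exact split_bound i j (by omega)
    · exact max_le (cseq_le i j _) (mPow_mono (subm_le A) _ i j)
  refine ⟨⨆ k, cseq A i j (k * q + r), ?_⟩
  have h3 := h1.max h2
  rw [max_eq_left zero_le] at h3
  have h4 : (fun k => mPow A (k * q + r) i j) = fun k =>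
      max (cseq A i j (k * q + r)) (mPow (subm A) (k * q + r) i j) := funext heq
  rw [h4]
  exact h3

end MTAux

open MTAux in
theorem stmt_0 (n : ℕ) (A : Matrix (Fin n) (Fin n) NNReal) (hA : mu A ≤ 1) :
    ∃ q : ℕ, 1 ≤ q ∧ ∀ j : ℕ, 1 ≤ j → j ≤ q →
      (∃ Atil : Matrix (Fin n) (Fin n) NNReal,
        Tendsto (fun k => mPow A (k * q + j)) atTop (nhds Atil) ∧
          mProd (mPow A q) Atil = Atil) ∧
      (∀ x : Fin n → NNReal, ∃ ξ : Fin n → NNReal,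
        Tendsto (fun k => mVec (mPow A (k * q + j)) x) atTop (nhds ξ) ∧
          mVec (mPow A q) ξ = ξ) := by
  set q := Nat.factorial n with hq
  have hq1 : 1 ≤ q := Nat.one_le_iff_ne_zero.mpr (Nat.factorial_ne_zero n)
  refine ⟨q, hq1, fun r hr1 _ => ?_⟩
  choose L hL using fun i j : Fin n => entry_conv hA i j hr1
  set Atil : Matrix (Fin n) (Fin n) NNReal := fun i j => L i j with hAtil
  have hmat : Tendsto (fun k => mPow A (k * q + r)) atTop (nhds Atil) := by
    apply tendsto_pi_nhds.mpr
    intro i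
    rw [tendsto_pi_nhds]
    intro j
    exact hL i j
  have hshift : Tendsto (fun k => mPow A ((k + 1) * q + r)) atTop (nhds Atil) :=
    hmat.comp (tendsto_add_atTop_nat 1)
  have hfun : (fun k => mPow A ((k + 1) * q + r)) =
      fun k => mProd (mPow A q) (mPow A (k * q + r)) := by
    funext k
    rw [show (k + 1) * q + r = q + (k * q + r) from by ring, mPow_add]
  have hcont : Tendsto (fun k => mProd (mPow A q) (mPow A (k * q + r))) atTop
      (nhds (mProd (mPow A q) Atil)) := by
    apply tendsto_pi_nhds.mpr
    intro i
    rw [tendsto_pi_nhds]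
    intro j
    apply tendsto_finset_sup
    intro t _
    exact tendsto_const_nhds.mul (hL t j)
  have hfix : mProd (mPow A q) Atil = Atil := by
    rw [hfun] at hshift
    exact tendsto_nhds_unique hcont hshift
  refine ⟨⟨Atil, hmat, hfix⟩, fun x => ?_⟩
  refine ⟨mVec Atil x, ?_, ?_⟩
  · rw [tendsto_pi_nhds]
    intro i
    apply tendsto_finset_sup
    intro t _
    exact (hL i t).mul tendsto_const_nhds
  · rw [← mVec_mProd, hfix]
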